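/- Let a₁, a₂ ≥ 2 be natural numbers and λ₁, λ₂ nonzero complex numbers. Define h : ℂ² → ℂ by h(z₁,z₂) = λ₁ z₂^{a₂}·conj(z₁) + λ₂ z₁^{a₁}·conj(z₂), and F(z) = (λ₁ z₂^{a₂}, λ₂ z₁^{a₁}) ∈ ℂ². Then for every z ∈ ℂ² with z ≠ 0 and h(z) = 0, and every nonzero vector v in the real span of {F(z), i·F(z)}, the real Fréchet derivative of h at z applied to v is nonzero; i.e. the real span of {F(z), i·F(z)} meets the kernel of Dh_z (an ℝ-linear map ℂ² → ℂ) only in 0. -/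

import Mathlib

open Complex

lemma derivEval (a₁ a₂ : ℕ) (l₁ l₂ : ℂ) (z v : ℂ × ℂ) :
    fderiv ℝ (fun w : ℂ × ℂ =>
        l₁ * w.2 ^ a₂ * (starRingEnd ℂ) w.1 + l₂ * w.1 ^ a₁ * (starRingEnd ℂ) w.2) z v
      = (l₁ * z.2 ^ a₂) * (starRingEnd ℂ) v.1
        + (starRingEnd ℂ) z.1 * (l₁ * ((a₂ : ℂ) * z.2 ^ (a₂ - 1) * v.2))
        + ((l₂ * z.1 ^ a₁) * (starRingEnd ℂ) v.2
        + (starRingEnd ℂ) z.2 * (l₂ * ((a₁ : ℂ) * z.1 ^ (a₁ - 1) * v.1))) := by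
  have hpow₂ : HasFDerivAt (fun w : ℂ × ℂ => w.2 ^ a₂)
      ((↑a₂ * z.2 ^ (a₂ - 1)) • (ContinuousLinearMap.snd ℝ ℂ ℂ)) z :=
    (hasDerivAt_pow a₂ z.2).comp_hasFDerivAt z hasFDerivAt_snd
  have hpow₁ : HasFDerivAt (fun w : ℂ × ℂ => w.1 ^ a₁)
      ((↑a₁ * z.1 ^ (a₁ - 1)) • (ContinuousLinearMap.fst ℝ ℂ ℂ)) z :=
    (hasDerivAt_pow a₁ z.1).comp_hasFDerivAt z hasFDerivAt_fst
  have hconj₁ : HasFDerivAt (fun w : ℂ × ℂ => (starRingEnd ℂ) w.1)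
      ((Complex.conjCLE.toContinuousLinearMap).comp (ContinuousLinearMap.fst ℝ ℂ ℂ)) z :=
    (Complex.conjCLE.toContinuousLinearMap.hasFDerivAt).comp z hasFDerivAt_fst
  have hconj₂ : HasFDerivAt (fun w : ℂ × ℂ => (starRingEnd ℂ) w.2)
      ((Complex.conjCLE.toContinuousLinearMap).comp (ContinuousLinearMap.snd ℝ ℂ ℂ)) z :=
    (Complex.conjCLE.toContinuousLinearMap.hasFDerivAt).comp z hasFDerivAt_snd
  have H := (((hpow₂.const_mul l₁).mul hconj₁).add ((hpow₁.const_mul l₂).mul hconj₂))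
  rw [(show HasFDerivAt (fun w : ℂ × ℂ =>
      l₁ * w.2 ^ a₂ * (starRingEnd ℂ) w.1 + l₂ * w.1 ^ a₁ * (starRingEnd ℂ) w.2) _ z from H).fderiv]
  simp [ContinuousLinearMap.add_apply, ContinuousLinearMap.smul_apply,
    ContinuousLinearMap.comp_apply, smul_eq_mul, mul_comm, mul_assoc, mul_left_comm]

set_option maxHeartbeats 1000000 in

/-- Example 2.5, case ii): for the foliation of `ℂ²` defined by the twisted vector field
`F(z) = (λ₁z₂^{a₂}, λ₂z₁^{a₁})`, the polar variety with respect to `Q(z) = |z₁|² + |z₂|²`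
is the zero set of `h(z) = λ₁z₂^{a₂}·conj(z₁) + λ₂z₁^{a₁}·conj(z₂)`, and at every point
`z ≠ 0` of it the real span of `{F(z), i·F(z)}` (the tangent space of the leaf) meets the
kernel of the real Fréchet derivative of `h` only in `0`: the foliation is transversal to
the polar variety away from the origin. -/
theorem stmt14 (a₁ a₂ : ℕ) (ha₁ : 2 ≤ a₁) (ha₂ : 2 ≤ a₂) (l₁ l₂ : ℂ)
    (hl₁ : l₁ ≠ 0) (hl₂ : l₂ ≠ 0)
    (h : ℂ × ℂ → ℂ)
    (hh : ∀ z : ℂ × ℂ,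
      h z = l₁ * z.2 ^ a₂ * (starRingEnd ℂ) z.1 + l₂ * z.1 ^ a₁ * (starRingEnd ℂ) z.2)
    (F : ℂ × ℂ → ℂ × ℂ)
    (hF : ∀ z : ℂ × ℂ, F z = (l₁ * z.2 ^ a₂, l₂ * z.1 ^ a₁)) :
    ∀ z : ℂ × ℂ, z ≠ 0 → h z = 0 →
      ∀ v ∈ Submodule.span ℝ {F z, Complex.I • F z}, fderiv ℝ h z v = 0 → v = 0 := by
  obtain ⟨b₁, rfl⟩ : ∃ b, a₁ = b + 2 := ⟨a₁ - 2, by omega⟩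
  obtain ⟨b₂, rfl⟩ : ∃ b, a₂ = b + 2 := ⟨a₂ - 2, by omega⟩
  intro z hz hz0 v hv hDv
  rw [show h = fun w : ℂ × ℂ =>
      l₁ * w.2 ^ (b₂ + 2) * (starRingEnd ℂ) w.1 + l₂ * w.1 ^ (b₁ + 2) * (starRingEnd ℂ) w.2
    from funext hh] at hDv
  rw [derivEval] at hDv
  rw [hh z] at hz0
  obtain ⟨s, t, hst⟩ := Submodule.mem_span_pair.mp hv
  set c : ℂ := (s : ℂ) + (t : ℂ) * Complex.I with hc_def
  have hvc : v = c • F z := by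
    rw [← hst]
    apply Prod.ext <;>
      simp [Complex.real_smul, smul_eq_mul, hc_def] <;> ring
  by_cases hc : c = 0
  · rw [hvc, hc, zero_smul]
  exfalso
  have hv1 : v.1 = c * (l₁ * z.2 ^ (b₂ + 2)) := by rw [hvc, hF z]; rfl
  have hv2 : v.2 = c * (l₂ * z.1 ^ (b₁ + 2)) := by rw [hvc, hF z]; rfl
  set A : ℂ := l₁ * l₂ * z.1 ^ (b₁ + 1) * z.2 ^ (b₂ + 1) *
      (((b₂ : ℂ) + 2) * (z.1 * (starRingEnd ℂ) z.1) + ((b₁ : ℂ) + 2) * (z.2 * (starRingEnd ℂ) z.2))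
    with hA_def
  set B : ℂ := (l₁ * z.2 ^ (b₂ + 2)) * (starRingEnd ℂ) (l₁ * z.2 ^ (b₂ + 2))
      + (l₂ * z.1 ^ (b₁ + 2)) * (starRingEnd ℂ) (l₂ * z.1 ^ (b₁ + 2)) with hB_def
  have hkey : c * A + (starRingEnd ℂ) c * B = 0 := by
    rw [← hDv, hv1, hv2, hA_def, hB_def]
    simp only [map_mul, map_pow, map_add]
    push_cast
    ring_nf
  -- abs A = abs B
  have habs : ‖A‖ = ‖B‖ := by
    have h1 : c * A = -((starRingEnd ℂ) c * B) := eq_neg_of_add_eq_zero_left hkey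
    have h2 := congrArg norm h1
    simp only [norm_mul, norm_neg, Complex.norm_conj] at h2
    exact mul_left_cancel₀ (norm_ne_zero_iff.mpr hc) h2
  set m₁ := ‖l₁‖ with hm₁
  set m₂ := ‖l₂‖ with hm₂
  set r₁ := ‖z.1‖ with hr₁
  set r₂ := ‖z.2‖ with hr₂
  have hA : ‖A‖
      = m₁ * m₂ * r₁ ^ (b₁ + 1) * r₂ ^ (b₂ + 1)
        * (((b₂ : ℝ) + 2) * r₁ ^ 2 + ((b₁ : ℝ) + 2) * r₂ ^ 2) := by
    have h1 : ((b₂ : ℂ) + 2) * (z.1 * (starRingEnd ℂ) z.1)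
        + ((b₁ : ℂ) + 2) * (z.2 * (starRingEnd ℂ) z.2)
        = ((((b₂ : ℝ) + 2) * r₁ ^ 2 + ((b₁ : ℝ) + 2) * r₂ ^ 2 : ℝ) : ℂ) := by
      rw [Complex.mul_conj, Complex.mul_conj]
      push_cast [Complex.normSq_eq_norm_sq]
      ring
    rw [hA_def, h1, norm_mul, norm_mul, norm_mul, norm_mul, norm_pow, norm_pow, Complex.norm_real,
      Real.norm_of_nonneg (by positivity)]
  have hB : ‖B‖ = (m₁ * r₂ ^ (b₂ + 2)) ^ 2 + (m₂ * r₁ ^ (b₁ + 2)) ^ 2 := by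
    have h1 : B = ((‖l₁ * z.2 ^ (b₂ + 2)‖ ^ 2
        + ‖l₂ * z.1 ^ (b₁ + 2)‖ ^ 2 : ℝ) : ℂ) := by
      rw [hB_def, Complex.mul_conj, Complex.mul_conj]
      push_cast [Complex.normSq_eq_norm_sq]
      ring
    rw [h1, Complex.norm_real, Real.norm_of_nonneg (by positivity), norm_mul, norm_mul,
      norm_pow, norm_pow]
  have hm₁' : 0 < m₁ := norm_pos_iff.mpr hl₁
  have hm₂' : 0 < m₂ := norm_pos_iff.mpr hl₂
  -- from h z = 0 : the moduli relation
  by_cases hz1 : z.1 = 0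
  · have hz2 : z.2 ≠ 0 := fun h2 => hz (Prod.ext hz1 h2)
    have hr1 : r₁ = 0 := by rw [hr₁, hz1, norm_zero]
    have hr2 : 0 < r₂ := norm_pos_iff.mpr hz2
    rw [hA, hB, hr1] at habs
    have hP : (0:ℝ) < (m₁ * r₂ ^ (b₂ + 2)) ^ 2 := by positivity
    simp [zero_pow] at habs
    nlinarith [hP, habs]
  by_cases hz2 : z.2 = 0
  · have hr2 : r₂ = 0 := by rw [hr₂, hz2, norm_zero]
    have hr1 : 0 < r₁ := norm_pos_iff.mpr hz1
    rw [hA, hB, hr2] at habs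
    have hQ : (0:ℝ) < (m₂ * r₁ ^ (b₁ + 2)) ^ 2 := by positivity
    simp [zero_pow] at habs
    nlinarith [hQ, habs]
  -- main case
  have hr1 : 0 < r₁ := norm_pos_iff.mpr hz1
  have hr2 : 0 < r₂ := norm_pos_iff.mpr hz2
  have hE2 : m₁ * r₂ ^ (b₂ + 2) * r₁ = m₂ * r₁ ^ (b₁ + 2) * r₂ := by
    have h1 : l₁ * z.2 ^ (b₂ + 2) * (starRingEnd ℂ) z.1
        = -(l₂ * z.1 ^ (b₁ + 2) * (starRingEnd ℂ) z.2) := eq_neg_of_add_eq_zero_left hz0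
    have h2 := congrArg norm h1
    simpa [norm_mul, norm_pow, Complex.norm_conj] using h2
  rw [hA, hB] at habs
  have hmain : ((m₁ * r₂ ^ (b₂ + 2)) ^ 2 + (m₂ * r₁ ^ (b₁ + 2)) ^ 2) * (r₁ * r₂)
      = (((b₂ : ℝ) + 2) * (m₂ * r₁ ^ (b₁ + 2)) ^ 2
        + ((b₁ : ℝ) + 2) * (m₁ * r₂ ^ (b₂ + 2)) ^ 2) * (r₁ * r₂) := by
    linear_combination (-(r₁ * r₂)) * habs
      + ((((b₂ : ℝ) + 2) * (m₂ * r₁ ^ (b₁ + 2)) * r₁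
        - ((b₁ : ℝ) + 2) * (m₁ * r₂ ^ (b₂ + 2)) * r₂)) * hE2
  have hfin : (m₁ * r₂ ^ (b₂ + 2)) ^ 2 + (m₂ * r₁ ^ (b₁ + 2)) ^ 2
      = ((b₂ : ℝ) + 2) * (m₂ * r₁ ^ (b₁ + 2)) ^ 2
        + ((b₁ : ℝ) + 2) * (m₁ * r₂ ^ (b₂ + 2)) ^ 2 :=
    mul_right_cancel₀ (by positivity) hmain
  have hP : 0 < m₁ * r₂ ^ (b₂ + 2) := by positivity
  have hQ : 0 < m₂ * r₁ ^ (b₁ + 2) := by positivity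
  nlinarith [hfin, mul_nonneg (Nat.cast_nonneg b₁ : (0:ℝ) ≤ b₁) (sq_nonneg (m₁ * r₂ ^ (b₂ + 2))),
    mul_nonneg (Nat.cast_nonneg b₂ : (0:ℝ) ≤ b₂) (sq_nonneg (m₂ * r₁ ^ (b₁ + 2))),
    sq_nonneg (m₁ * r₂ ^ (b₂ + 2)), sq_nonneg (m₂ * r₁ ^ (b₁ + 2)), hP, hQ]
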